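/- Let Σ be an n×n positive definite matrix (n > 1), μ̄ ≠ 0, and μ̇ ≠ 0 with μ̇ᵀΣ⁻¹μ̄ = 0. For t ∈ ℝ set w_t = Σ⁻¹(tμ̄ + (1−t)μ̇). Let s* ∈ (0,1) and define t* = 1/(1 + √((1−s*)/s* · (μ̄ᵀΣ⁻¹μ̄)/(μ̇ᵀΣ⁻¹μ̇))). Then (w_{t*}ᵀμ̄)² / (w_{t*}ᵀΣw_{t*}) = s* · μ̄ᵀΣ⁻¹μ̄ and w_{t*}ᵀμ̄ > 0. -/

import Mathlib

open Matrix

/-- with `w_t = Σ⁻¹(tμ̄ + (1−t)μ̇)`, `μ̇ᵀΣ⁻¹μ̄ = 0`, and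
`t* = 1/(1 + √((1−s*)/s* · (μ̄ᵀΣ⁻¹μ̄)/(μ̇ᵀΣ⁻¹μ̇)))`, one has
`(w_{t*}ᵀμ̄)²/(w_{t*}ᵀΣw_{t*}) = s*·μ̄ᵀΣ⁻¹μ̄` and `w_{t*}ᵀμ̄ > 0`. -/
theorem purified_threshold_rule {n : ℕ} (hn : 1 < n)
    (S : Matrix (Fin n) (Fin n) ℝ) (hS : S.PosDef)
    (μbar μdot : Fin n → ℝ) (hμbar : μbar ≠ 0) (hμdot : μdot ≠ 0)
    (horth : μdot ⬝ᵥ (S⁻¹ *ᵥ μbar) = 0)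
    (sstar : ℝ) (hsstar : sstar ∈ Set.Ioo (0:ℝ) 1)
    (tstar : ℝ)
    (ht : tstar = 1 / (1 + Real.sqrt ((1 - sstar) / sstar
      * ((μbar ⬝ᵥ (S⁻¹ *ᵥ μbar)) / (μdot ⬝ᵥ (S⁻¹ *ᵥ μdot))))))
    (w : Fin n → ℝ) (hw : w = S⁻¹ *ᵥ (tstar • μbar + (1 - tstar) • μdot)) :
    (w ⬝ᵥ μbar) ^ 2 / (w ⬝ᵥ (S *ᵥ w)) = sstar * (μbar ⬝ᵥ (S⁻¹ *ᵥ μbar)) ∧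
    0 < w ⬝ᵥ μbar := by
  obtain ⟨hs0, hs1⟩ := hsstar
  set a := μbar ⬝ᵥ (S⁻¹ *ᵥ μbar) with ha_def
  set b := μdot ⬝ᵥ (S⁻¹ *ᵥ μdot) with hb_def
  have hSinv : (S⁻¹).PosDef := hS.inv
  have ha : 0 < a := hSinv.re_dotProduct_pos hμbar
  have hb : 0 < b := hSinv.re_dotProduct_pos hμdot
  have hsymm : (S⁻¹)ᵀ = S⁻¹ := hSinv.isHermitian
  have horth' : μbar ⬝ᵥ (S⁻¹ *ᵥ μdot) = 0 := by
    rw [dotProduct_mulVec, ← mulVec_transpose, hsymm, dotProduct_comm]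
    exact horth
  have e1 : (S⁻¹ *ᵥ μbar) ⬝ᵥ μdot = 0 := by rw [dotProduct_comm]; exact horth
  have e2 : (S⁻¹ *ᵥ μdot) ⬝ᵥ μbar = 0 := by rw [dotProduct_comm]; exact horth'
  have e3 : (S⁻¹ *ᵥ μbar) ⬝ᵥ μbar = a := by rw [dotProduct_comm]
  have e4 : (S⁻¹ *ᵥ μdot) ⬝ᵥ μdot = b := by rw [dotProduct_comm]
  set r := Real.sqrt ((1 - sstar) / sstar * (a / b)) with hr_def
  have harg : 0 < (1 - sstar) / sstar * (a / b) :=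
    mul_pos (div_pos (by linarith) hs0) (div_pos ha hb)
  have hr : 0 < r := Real.sqrt_pos.mpr harg
  have hr2 : r ^ 2 = (1 - sstar) / sstar * (a / b) := Real.sq_sqrt harg.le
  have h1r : (0:ℝ) < 1 + r := by linarith
  have htpos : 0 < tstar := by rw [ht]; positivity
  have h1t : 1 - tstar = r * tstar := by
    rw [ht]; field_simp; ring
  have hwμ : w ⬝ᵥ μbar = tstar * a := by
    rw [hw]
    simp only [mulVec_add, mulVec_smul, add_dotProduct, smul_dotProduct, e3, e2,
      smul_eq_mul]
    ring
  have hSw : S *ᵥ w = tstar • μbar + (1 - tstar) • μdot := by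
    rw [hw, mulVec_mulVec, mul_nonsing_inv S (isUnit_iff_ne_zero.mpr hS.det_pos.ne'),
      one_mulVec]
  have hwSw : w ⬝ᵥ (S *ᵥ w) = tstar ^ 2 * a + (1 - tstar) ^ 2 * b := by
    rw [hSw, hw]
    simp only [mulVec_add, mulVec_smul, add_dotProduct, smul_dotProduct, dotProduct_add,
      dotProduct_smul, e1, e2, e3, e4, smul_eq_mul]
    ring
  have hrb : r ^ 2 * b = (1 - sstar) / sstar * a := by
    rw [hr2]; field_simp
  have hdenom : w ⬝ᵥ (S *ᵥ w) = tstar ^ 2 * a / sstar := by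
    rw [hwSw, h1t, show (r * tstar) ^ 2 * b = tstar ^ 2 * (r ^ 2 * b) from by ring, hrb]
    field_simp
    ring
  constructor
  · rw [hwμ, hdenom]
    have ht0 : tstar ≠ 0 := htpos.ne'
    field_simp
  · rw [hwμ]; positivity
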